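/- Let F be a field of characteristic ≠ 2 and R a simple associative unital F-algebra with an involution * of the first kind, and assume S ⊊ R. If K is not a skew-commutative set (i.e., there exist x, y ∈ K with xy ≠ −yx), then R = K + KSK, where K + KSK is the additive subgroup of R generated by K together with all products akb with a, b ∈ K and k ∈ S. -/

import Mathlib

set_option linter.unusedSectionVars false

namespace Stmt14Aux

variable {F R : Type*} [Field F] [Ring R] [Algebra F R] [StarRing R]

/-- The additive subgroup `K + KSK`. -/
def TT (R : Type*) [Ring R] [StarRing R] : AddSubgroup R :=
  AddSubgroup.closure ({r : R | star r = -r} ∪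
    {z : R | ∃ a ∈ {r : R | star r = -r}, ∃ s ∈ {r : R | star r = r},
      ∃ b ∈ {r : R | star r = -r}, z = a * s * b})

variable {a b s j m : R}

lemma skew_mem (ha : star a = -a) : a ∈ TT R :=
  AddSubgroup.subset_closure (Or.inl ha)

lemma ksk_mem (ha : star a = -a) (hs : star s = s) (hb : star b = -b) :
    a * s * b ∈ TT R :=
  AddSubgroup.subset_closure (Or.inr ⟨a, ha, s, hs, b, hb, rfl⟩)

lemma kk_mem (ha : star a = -a) (hb : star b = -b) : a * b ∈ TT R := by
  have h := ksk_mem ha (star_one R) hb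
  rwa [mul_one] at h

lemma star_algebraMap' (hfirst : Set.center R ⊆ {r : R | star r = r}) (c : F) :
    star (algebraMap F R c) = algebraMap F R c :=
  hfirst (Semigroup.mem_center_iff.mpr fun g => (Algebra.commutes c g).symm)

lemma star_smul' (hfirst : Set.center R ⊆ {r : R | star r = r}) (c : F) (x : R) :
    star (c • x) = c • star x := by
  rw [Algebra.smul_def, star_mul, star_algebraMap' hfirst, Algebra.smul_def]
  exact (Algebra.commutes c (star x)).symm

lemma smul_mem' (hfirst : Set.center R ⊆ {r : R | star r = r}) (c : F) (hj : j ∈ TT R) :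
    c • j ∈ TT R := by
  induction hj using AddSubgroup.closure_induction with
  | mem x hx =>
    rcases hx with hk | ⟨a, ha, s, hs, b, hb, rfl⟩
    · exact skew_mem (by rw [star_smul' hfirst, hk, smul_neg])
    · have e : c • (a * s * b) = (c • a) * s * b := by
        rw [smul_mul_assoc, smul_mul_assoc]
      rw [e]
      exact ksk_mem (by rw [star_smul' hfirst, ha, smul_neg]) hs hb
  | zero => simpa using (TT R).zero_mem
  | add u v _ _ pu pv => rw [smul_add]; exact add_mem pu pv
  | neg u _ pu => rw [smul_neg]; exact neg_mem pu

lemma half_mem (hfirst : Set.center R ⊆ {r : R | star r = r}) (hchar : (2 : F) ≠ 0)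
    (h : m + m ∈ TT R) : m ∈ TT R := by
  have h2 : (2 : F)⁻¹ • (m + m) ∈ TT R := smul_mem' hfirst _ h
  rwa [← two_smul F m, smul_smul, inv_mul_cancel₀ hchar, one_smul] at h2


section
variable (hfirst : Set.center R ⊆ {r : R | star r = r}) (hchar : (2 : F) ≠ 0)
include hfirst hchar
variable (hfirst : Set.center R ⊆ {r : R | star r = r}) (hchar : (2 : F) ≠ 0)
include hfirst hchar

lemma kkk_mem (ha : star a = -a) (hb : star b = -b) (hc : star c = -c) :
    a * b * c ∈ TT R := by
  have K1 : (a*b - b*a) * c ∈ TT R :=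
    kk_mem (by simp only [star_sub, star_mul, ha, hb]; noncomm_ring) hc
  have K2 : (a*b + b*a) * c + c * (a*b + b*a) ∈ TT R :=
    skew_mem (by simp only [star_add, star_mul, ha, hb, hc]; noncomm_ring)
  have K3 : (a*b + b*a) * c - c * (a*b + b*a) ∈ TT R := by
    have h1 : (a*c - c*a) * b ∈ TT R :=
      kk_mem (by simp only [star_sub, star_mul, ha, hc]; noncomm_ring) hb
    have h2 : b * (a*c - c*a) ∈ TT R :=
      kk_mem hb (by simp only [star_sub, star_mul, ha, hc]; noncomm_ring)
    have h3 : a * (b*c - c*b) ∈ TT R :=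
      kk_mem ha (by simp only [star_sub, star_mul, hb, hc]; noncomm_ring)
    have h4 : (b*c - c*b) * a ∈ TT R :=
      kk_mem (by simp only [star_sub, star_mul, hb, hc]; noncomm_ring) ha
    have h := add_mem (add_mem (add_mem h1 h2) h3) h4
    have e : (a*c - c*a)*b + b*(a*c - c*a) + a*(b*c - c*b) + (b*c - c*b)*a
        = (a*b + b*a) * c - c * (a*b + b*a) := by noncomm_ring
    rwa [e] at h
  have big : ((a*b-b*a)*c + (a*b-b*a)*c) + ((a*b+b*a)*c + c*(a*b+b*a))
      + ((a*b+b*a)*c - c*(a*b+b*a))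
      = ((a*b*c + a*b*c) + (a*b*c + a*b*c)) := by noncomm_ring
  have h := add_mem (add_mem (add_mem K1 K1) K2) K3
  rw [big] at h
  exact half_mem hfirst hchar (half_mem hfirst hchar h)

lemma jordan_mem (hj : j ∈ TT R) (r : R) : r * j + j * r ∈ TT R := by
  have hσ : star (r + star r) = r + star r := by rw [star_add, star_star, add_comm]
  have hκ : star (r - star r) = -(r - star r) := by
    rw [star_sub, star_star]; exact (neg_sub _ _).symm
  induction hj using AddSubgroup.closure_induction with
  | mem k hk =>
    rcases hk with hk | ⟨a, ha, s, hs, b, hb, rfl⟩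
    · replace hk : star k = -k := hk
      have G1 : (r + star r) * k + k * (r + star r) ∈ TT R :=
        skew_mem (by simp only [star_add, star_mul, star_star, hk]; noncomm_ring)
      have G2 : (r - star r) * k + k * (r - star r) ∈ TT R :=
        add_mem (kk_mem hκ hk) (kk_mem hk hκ)
      have h := add_mem G1 G2
      have big : ((r + star r) * k + k * (r + star r)) + ((r - star r) * k + k * (r - star r))
          = (r*k + k*r) + (r*k + k*r) := by noncomm_ring
      rw [big] at h
      exact half_mem hfirst hchar h
    · replace ha : star a = -a := ha
      replace hs : star s = s := hs
      replace hb : star b = -b := hb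
      have H1 : ((r + star r)*a + a*(r + star r))*s*b ∈ TT R :=
        ksk_mem (by simp only [star_add, star_mul, star_star, ha]; noncomm_ring) hs hb
      have H2 : a*((r + star r)*s + s*(r + star r))*b ∈ TT R :=
        ksk_mem ha (by simp only [star_add, star_mul, star_star, hs]; noncomm_ring) hb
      have H3 : a*s*((r + star r)*b + b*(r + star r)) ∈ TT R :=
        ksk_mem ha hs (by simp only [star_add, star_mul, star_star, hb]; noncomm_ring)
      have H4 : ((r - star r)*a - a*(r - star r))*s*b ∈ TT R :=
        ksk_mem (by simp only [star_sub, star_add, star_mul, star_star, ha]; noncomm_ring) hs hb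
      have H5 : a*((r - star r)*s + s*(r - star r))*b ∈ TT R :=
        kkk_mem hfirst hchar ha
          (by simp only [star_add, star_sub, star_mul, star_star, hs]; noncomm_ring) hb
      have H6 : a*s*((r - star r)*b - b*(r - star r)) ∈ TT R :=
        ksk_mem ha hs (by simp only [star_sub, star_add, star_mul, star_star, hb]; noncomm_ring)
      have h := add_mem (add_mem (sub_mem H1 H2) H3) (sub_mem (add_mem H4 H5) H6)
      have big : (((r + star r)*a + a*(r + star r))*s*b - a*((r + star r)*s + s*(r + star r))*b
            + a*s*((r + star r)*b + b*(r + star r)))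
          + (((r - star r)*a - a*(r - star r))*s*b + a*((r - star r)*s + s*(r - star r))*b
            - a*s*((r - star r)*b - b*(r - star r)))
          = (r*(a*s*b) + (a*s*b)*r) + (r*(a*s*b) + (a*s*b)*r) := by noncomm_ring
      rw [big] at h
      exact half_mem hfirst hchar h
  | zero => simpa using (TT R).zero_mem
  | add u v _ _ pu pv =>
    have e : r*(u+v) + (u+v)*r = (r*u + u*r) + (r*v + v*r) := by noncomm_ring
    rw [e]; exact add_mem pu pv
  | neg u _ pu =>
    have e : r*(-u) + (-u)*r = -(r*u + u*r) := by noncomm_ring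
    rw [e]; exact neg_mem pu

lemma sigma_mem (hj : j ∈ TT R) (x y : R) : x*j*y + y*j*x ∈ TT R := by
  have p1 : x*j + j*x ∈ TT R := jordan_mem hfirst hchar hj x
  have q1 := jordan_mem hfirst hchar p1 y
  have p2 : y*j + j*y ∈ TT R := jordan_mem hfirst hchar hj y
  have q2 := jordan_mem hfirst hchar p2 x
  have r1 := jordan_mem hfirst hchar hj (x*y)
  have r2 := jordan_mem hfirst hchar hj (y*x)
  have h := sub_mem (sub_mem (add_mem q1 q2) r1) r2
  have big : (y*(x*j + j*x) + (x*j + j*x)*y) + (x*(y*j + j*y) + (y*j + j*y)*x)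
      - ((x*y)*j + j*(x*y)) - ((y*x)*j + j*(y*x))
      = (x*j*y + y*j*x) + (x*j*y + y*j*x) := by noncomm_ring
  rw [big] at h
  exact half_mem hfirst hchar h

lemma i5_mem (hj : j ∈ TT R) (x y c : R) :
    y*j*(x*c - c*x) + (c*y - y*c)*j*x ∈ TT R := by
  have hσ := sigma_mem hfirst hchar hj x y
  have F1 := jordan_mem hfirst hchar hσ c
  have F2 := sigma_mem hfirst hchar hj (c*x) y
  have F3 := sigma_mem hfirst hchar hj x (y*c)
  have h := sub_mem (sub_mem F1 F2) F3
  have big : (c*(x*j*y + y*j*x) + (x*j*y + y*j*x)*c)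
      - ((c*x)*j*y + y*j*(c*x)) - (x*j*(y*c) + (y*c)*j*x)
      = y*j*(x*c - c*x) + (c*y - y*c)*j*x := by noncomm_ring
  rwa [big] at h

lemma dd_mem (hj : j ∈ TT R) (c w x y : R) :
    (c*w - w*c)*(y*j*x) - (y*j*x)*(c*w - w*c) ∈ TT R := by
  have E1 := i5_mem hfirst hchar hj x (w*y) c
  have hI5 := i5_mem hfirst hchar hj x y c
  have E2 := jordan_mem hfirst hchar hI5 w
  have E3 := i5_mem hfirst hchar hj (x*w) y c
  have h := add_mem (sub_mem E1 E2) E3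
  have big : (((w*y)*j*(x*c - c*x) + (c*(w*y) - (w*y)*c)*j*x)
        - (w*(y*j*(x*c - c*x) + (c*y - y*c)*j*x) + (y*j*(x*c - c*x) + (c*y - y*c)*j*x)*w))
      + (y*j*((x*w)*c - c*(x*w)) + (c*y - y*c)*j*(x*w))
      = (c*w - w*c)*(y*j*x) - (y*j*x)*(c*w - w*c) := by noncomm_ring
  rwa [big] at h


end



/-- In a simple unital ring, the additive closure of `{ y * j₀ * x }` is everything,
for `j₀ ≠ 0`. -/
lemma span_top [IsSimpleRing R] (j₀ : R) (hne : j₀ ≠ 0) :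
    AddSubgroup.closure {z : R | ∃ y x : R, z = y * j₀ * x} = ⊤ := by
  set N := AddSubgroup.closure {z : R | ∃ y x : R, z = y * j₀ * x} with hN
  have hL : ∀ r n : R, n ∈ N → r * n ∈ N := by
    intro r n hn
    induction hn using AddSubgroup.closure_induction with
    | mem t ht =>
      obtain ⟨y, x, rfl⟩ := ht
      exact AddSubgroup.subset_closure ⟨r*y, x, by noncomm_ring⟩
    | zero => simpa using N.zero_mem
    | add u v _ _ pu pv => rw [mul_add]; exact add_mem pu pv
    | neg u _ pu => rw [mul_neg]; exact neg_mem pu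
  have hR : ∀ r n : R, n ∈ N → n * r ∈ N := by
    intro r n hn
    induction hn using AddSubgroup.closure_induction with
    | mem t ht =>
      obtain ⟨y, x, rfl⟩ := ht
      exact AddSubgroup.subset_closure ⟨y, x*r, by noncomm_ring⟩
    | zero => simpa using N.zero_mem
    | add u v _ _ pu pv => rw [add_mul]; exact add_mem pu pv
    | neg u _ pu => rw [neg_mul]; exact neg_mem pu
  let I : TwoSidedIdeal R := TwoSidedIdeal.mk' (N : Set R) N.zero_mem
    (fun hx hy => N.add_mem hx hy) (fun hx => N.neg_mem hx)
    (fun hy => hL _ _ hy) (fun hx => hR _ _ hx)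
  have hmem : ∀ x : R, x ∈ I ↔ x ∈ N := fun x =>
    TwoSidedIdeal.mem_mk' _ _ _ _ _ _ x
  haveI := IsSimpleRing.simple (R := R)
  rcases eq_bot_or_eq_top I with hbot | htop
  · exfalso
    have hj : j₀ ∈ I := (hmem j₀).mpr
      (AddSubgroup.subset_closure ⟨1, 1, by rw [one_mul, mul_one]⟩)
    rw [hbot] at hj
    exact hne ((TwoSidedIdeal.mem_bot R).mp hj)
  · rw [AddSubgroup.eq_top_iff']
    intro x
    have : x ∈ I := by rw [htop]; trivial
    exact (hmem x).mp this

/-- A nonzero central element of a simple unital ring has a central inverse-cancel property. -/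
lemma cancel_central [IsSimpleRing R] {z₀ : R} (hz : z₀ ≠ 0)
    (hcen : ∀ r : R, z₀ * r = r * z₀) : ∀ t : R, z₀ * t = 0 → t = 0 := by
  intro t ht
  let Ann : TwoSidedIdeal R := TwoSidedIdeal.mk' {u : R | z₀ * u = 0}
    (by simp)
    (fun {x y} hx hy => by
      simp only [Set.mem_setOf_eq] at hx hy ⊢; rw [mul_add, hx, hy, add_zero])
    (fun {x} hx => by
      simp only [Set.mem_setOf_eq] at hx ⊢; rw [mul_neg, hx, neg_zero])
    (fun {x y} hy => by
      simp only [Set.mem_setOf_eq] at hy ⊢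
      rw [← mul_assoc, hcen x, mul_assoc, hy, mul_zero])
    (fun {x y} hx => by
      simp only [Set.mem_setOf_eq] at hx ⊢; rw [← mul_assoc, hx, zero_mul])
  haveI := IsSimpleRing.simple (R := R)
  rcases eq_bot_or_eq_top Ann with hbot | htop
  · have hmem : t ∈ Ann := (TwoSidedIdeal.mem_mk' _ _ _ _ _ _ t).mpr ht
    rw [hbot] at hmem
    exact (TwoSidedIdeal.mem_bot R).mp hmem
  · exfalso
    have h1 : (1:R) ∈ Ann := by rw [htop]; trivial
    have := (TwoSidedIdeal.mem_mk' _ _ _ _ _ _ (1:R)).mp h1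
    simp only [Set.mem_setOf_eq, mul_one] at this
    exact hz this

/-- If all commutators are central, a simple unital ring is commutative. -/
lemma comm_of_comm_central [IsSimpleRing R]
    (H : ∀ x y z : R, (x*y - y*x)*z = z*(x*y - y*x)) : ∀ x y : R, x*y = y*x := by
  intro x y
  by_contra hne
  have hz0 : x*y - y*x ≠ 0 := sub_ne_zero.mpr hne
  have hcen : ∀ r : R, (x*y - y*x) * r = r * (x*y - y*x) := H x y
  obtain ⟨u, hu⟩ : ∃ u : R, (1:R) = (x*y - y*x) * u := by
    have key : ∀ n : R, n ∈ AddSubgroup.closure {z : R | ∃ p q : R, z = p * (x*y - y*x) * q} →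
        ∃ u : R, n = (x*y - y*x) * u := by
      intro n hn
      induction hn using AddSubgroup.closure_induction with
    | mem t ht =>
      obtain ⟨p, q, rfl⟩ := ht
      exact ⟨p*q, by rw [← mul_assoc, ← hcen p, mul_assoc]⟩
    | zero => exact ⟨0, by rw [mul_zero]⟩
    | add a b _ _ pa pb =>
      obtain ⟨u, hu⟩ := pa; obtain ⟨v, hv⟩ := pb
      exact ⟨u + v, by rw [mul_add, ← hu, ← hv]⟩
    | neg a _ pa =>
      obtain ⟨u, hu⟩ := pa
      exact ⟨-u, by rw [mul_neg, ← hu]⟩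
    exact key 1 (by rw [span_top _ hz0]; trivial)
  have hucen : ∀ r : R, u * r = r * u := by
    intro r
    have h0 : (x*y - y*x) * (r*u - u*r) = 0 := by
      have e1 : (x*y - y*x) * (r*u - u*r)
          = ((x*y - y*x)*r)*u - ((x*y - y*x)*u)*r := by noncomm_ring
      have e2 : ((x*y - y*x)*r)*u = r := by rw [hcen r, mul_assoc, ← hu, mul_one]
      have e3 : ((x*y - y*x)*u)*r = r := by rw [← hu, one_mul]
      rw [e1, e2, e3, sub_self]
    have := cancel_central hz0 hcen _ h0
    exact (sub_eq_zero.mp this).symm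
  have hxz : ∀ r : R, (x*(x*y - y*x))*r = r*(x*(x*y - y*x)) := by
    intro r
    have e : x*(x*y - y*x) = x*(x*y) - (x*y)*x := by noncomm_ring
    rw [e]; exact H x (x*y) r
  have hxcen : ∀ r : R, x*r = r*x := by
    intro r
    have hx1 : (x*(x*y - y*x))*u = x := by rw [mul_assoc, ← hu, mul_one]
    calc x*r = ((x*(x*y - y*x))*u)*r := by rw [hx1]
      _ = (x*(x*y - y*x))*(u*r) := by noncomm_ring
      _ = (x*(x*y - y*x))*(r*u) := by rw [hucen r]
      _ = ((x*(x*y - y*x))*r)*u := by noncomm_ring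
      _ = (r*(x*(x*y - y*x)))*u := by rw [hxz r]
      _ = r*((x*(x*y - y*x))*u) := by noncomm_ring
      _ = r*x := by rw [hx1]
  exact hne (hxcen y)


section
variable [IsSimpleRing R]
variable (hfirst : Set.center R ⊆ {r : R | star r = r}) (hchar : (2 : F) ≠ 0)
variable {j₀ : R} (hj₀ : j₀ ∈ TT R) (hne : j₀ ≠ 0)
include hfirst hchar hj₀ hne

lemma comm2_mem (c w r : R) : (c*w - w*c)*r - r*(c*w - w*c) ∈ TT R := by
  have hr : r ∈ AddSubgroup.closure {z : R | ∃ y x : R, z = y * j₀ * x} := by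
    rw [span_top j₀ hne]; trivial
  induction hr using AddSubgroup.closure_induction with
  | mem t ht =>
    obtain ⟨y, x, rfl⟩ := ht
    exact dd_mem hfirst hchar hj₀ c w x y
  | zero => simpa using (TT R).zero_mem
  | add u v _ _ pu pv =>
    have e : (c*w - w*c)*(u+v) - (u+v)*(c*w - w*c)
        = ((c*w - w*c)*u - u*(c*w - w*c)) + ((c*w - w*c)*v - v*(c*w - w*c)) := by
      noncomm_ring
    rw [e]; exact add_mem pu pv
  | neg u _ pu =>
    have e : (c*w - w*c)*(-u) - (-u)*(c*w - w*c)
        = -((c*w - w*c)*u - u*(c*w - w*c)) := by noncomm_ring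
    rw [e]; exact neg_mem pu

lemma v_mul_mem (a b z X : R) :
    ((a*b - b*a)*z - z*(a*b - b*a)) * X ∈ TT R := by
  have hv : (a*b - b*a)*z - z*(a*b - b*a) ∈ TT R :=
    comm2_mem hfirst hchar hj₀ hne a b z
  have h1 := jordan_mem hfirst hchar hv X
  have h2 := comm2_mem hfirst hchar hj₀ hne (a*b - b*a) z X
  have h := add_mem h1 h2
  have big : (X*((a*b - b*a)*z - z*(a*b - b*a)) + ((a*b - b*a)*z - z*(a*b - b*a))*X)
      + (((a*b - b*a)*z - z*(a*b - b*a))*X - X*((a*b - b*a)*z - z*(a*b - b*a)))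
      = (((a*b - b*a)*z - z*(a*b - b*a)) * X)
        + (((a*b - b*a)*z - z*(a*b - b*a)) * X) := by noncomm_ring
  rw [big] at h
  exact half_mem hfirst hchar h

lemma xvy_mem (a b z X Y : R) :
    X * (((a*b - b*a)*z - z*(a*b - b*a)) * Y) ∈ TT R := by
  have hm : ((a*b - b*a)*z - z*(a*b - b*a)) * Y ∈ TT R :=
    v_mul_mem hfirst hchar hj₀ hne a b z Y
  have h1 := jordan_mem hfirst hchar hm X
  have h2 : (((a*b - b*a)*z - z*(a*b - b*a)) * Y) * X ∈ TT R := by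
    have h := v_mul_mem hfirst hchar hj₀ hne a b z (Y*X)
    rwa [← mul_assoc] at h
  have h := sub_mem h1 h2
  have e : (X*(((a*b - b*a)*z - z*(a*b - b*a)) * Y)
        + (((a*b - b*a)*z - z*(a*b - b*a)) * Y)*X)
      - (((a*b - b*a)*z - z*(a*b - b*a)) * Y)*X
      = X * (((a*b - b*a)*z - z*(a*b - b*a)) * Y) := by noncomm_ring
  rwa [e] at h

end

end Stmt14Aux

/-- If `R` is simple and `K` is not a skew-commutative set, then `R = K + KSK`. -/
theorem stmt_14 (F R : Type*) [Field F] [Ring R] [Algebra F R] [StarRing R]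
    [IsSimpleRing R]
    (hchar : (2 : F) ≠ 0)
    (hfirst : Set.center R ⊆ {r : R | star r = r})
    (hproper : {r : R | star r = r} ≠ Set.univ)
    (hnsc : ∃ x ∈ {r : R | star r = -r}, ∃ y ∈ {r : R | star r = -r},
      x * y ≠ -(y * x)) :
    (AddSubgroup.closure ({r : R | star r = -r} ∪
        {z : R | ∃ a ∈ {r : R | star r = -r}, ∃ s ∈ {r : R | star r = r},
          ∃ b ∈ {r : R | star r = -r}, z = a * s * b}) : Set R) = Set.univ := by
  obtain ⟨x, hx, y, hy, hxy⟩ := hnsc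
  replace hx : star x = -x := hx
  replace hy : star y = -y := hy
  show ((Stmt14Aux.TT R : AddSubgroup R) : Set R) = Set.univ
  have hj₀ : x*y + y*x ∈ Stmt14Aux.TT R :=
    add_mem (Stmt14Aux.kk_mem hx hy) (Stmt14Aux.kk_mem hy hx)
  have hne0 : x*y + y*x ≠ 0 := fun h => hxy (eq_neg_iff_add_eq_zero.mpr h)
  by_cases hcase : ∀ a b z : R, (a*b - b*a)*z - z*(a*b - b*a) = 0
  · exfalso
    have H : ∀ p q r : R, (p*q - q*p)*r = r*(p*q - q*p) := fun p q r =>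
      sub_eq_zero.mp (hcase p q r)
    have hcomm := Stmt14Aux.comm_of_comm_central H
    apply hproper
    rw [Set.eq_univ_iff_forall]
    exact fun r => hfirst (Semigroup.mem_center_iff.mpr fun g => hcomm g r)
  · push_neg at hcase
    obtain ⟨a, b, z, hvne⟩ := hcase
    rw [Set.eq_univ_iff_forall]
    intro r
    show r ∈ Stmt14Aux.TT R
    have hr : r ∈ AddSubgroup.closure
        {t : R | ∃ X Y : R, t = X * ((a*b - b*a)*z - z*(a*b - b*a)) * Y} := by
      rw [Stmt14Aux.span_top _ hvne]; trivial
    induction hr using AddSubgroup.closure_induction with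
    | mem t ht =>
      obtain ⟨X, Y, rfl⟩ := ht
      have h := Stmt14Aux.xvy_mem hfirst hchar hj₀ hne0 a b z X Y
      rwa [← mul_assoc] at h
    | zero => exact (Stmt14Aux.TT R).zero_mem
    | add u v _ _ pu pv => exact add_mem pu pv
    | neg u _ pu => exact neg_mem pu
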